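/- Let n ≥ 3, let 0 ≤ k < n, and let v ∈ ℂ with |v| = 1; assume v ≠ ±1 in case k = 0 or 2k = n. For 0 < |q| < 1 set x(q) = X(vq^k,qⁿ), y(q) = Y(vq^k,qⁿ), a₄(qⁿ) = −5 Σ_{m≥1} σ₃(m) qⁿᵐ, α₃(q) = x(q) + 2y(q), s'(q) = (a₄(qⁿ) − x(q) + 3x(q)²)/α₃(q), α₁(q) = (x(q) + 6x(q)² + 2a₄(qⁿ))/α₃(q), and α₂(q) = 3x(q) − s'(q) − s'(q)². Then x and y extend holomorphically across q = 0; there is ε ∈ (0,1) such that α₃(q) ≠ 0 for 0 < |q| < ε; and α₁, α₂, α₃ extend holomorphically across q = 0 on the disc |q| < ε. Moreover, the holomorphic extension of α₃ vanishes at q = 0 to order 0 with value (v+v²)/(1−v)³ if k = 0; to order exactly k with leading coefficient v if 0 < k < n/2; to order exactly n/2 with leading coefficient v − v^{−1} if 2k = n; and to order exactly n−k with leading coefficient −v^{−1} if n/2 < k < n. -/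

import Mathlib

/-- `s₁(Q) = Σ_{m≥1} σ₁(m) Qᵐ`. -/
noncomputable def s1ser (Q : ℂ) : ℂ :=
  ∑' m : ℕ, (∑ d ∈ Nat.divisors (m + 1), (d : ℂ)) * Q ^ (m + 1)

/-- `X(u,Q) = Σ_{m∈ℤ} Qᵐu/(1−Qᵐu)² − 2s₁(Q)`. -/
noncomputable def Xtate (u Q : ℂ) : ℂ :=
  (∑' m : ℤ, Q ^ m * u / (1 - Q ^ m * u) ^ 2) - 2 * s1ser Q

/-- `Y(u,Q) = Σ_{m∈ℤ} (Qᵐu)²/(1−Qᵐu)³ + s₁(Q)`. -/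
noncomputable def Ytate (u Q : ℂ) : ℂ :=
  (∑' m : ℤ, (Q ^ m * u) ^ 2 / (1 - Q ^ m * u) ^ 3) + s1ser Q

/-- `x(q) = X(vqᵏ, qⁿ)`. -/
noncomputable def xT (n k : ℕ) (v q : ℂ) : ℂ := Xtate (v * q ^ k) (q ^ n)

/-- `y(q) = Y(vqᵏ, qⁿ)`. -/
noncomputable def yT (n k : ℕ) (v q : ℂ) : ℂ := Ytate (v * q ^ k) (q ^ n)

/-- `a₄(qⁿ) = −5 Σ_{m≥1} σ₃(m) qⁿᵐ`. -/
noncomputable def a4T (n : ℕ) (q : ℂ) : ℂ :=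
  -5 * ∑' m : ℕ, (∑ d ∈ Nat.divisors (m + 1), (d : ℂ) ^ 3) * q ^ (n * (m + 1))

/-- `α₃(q) = x(q) + 2y(q)`. -/
noncomputable def α₃T (n k : ℕ) (v q : ℂ) : ℂ := xT n k v q + 2 * yT n k v q

/-- `s'(q) = (a₄(qⁿ) − x(q) + 3x(q)²)/α₃(q)`. -/
noncomputable def s'T (n k : ℕ) (v q : ℂ) : ℂ :=
  (a4T n q - xT n k v q + 3 * xT n k v q ^ 2) / α₃T n k v q

/-- `α₁(q) = (x(q) + 6x(q)² + 2a₄(qⁿ))/α₃(q)`. -/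
noncomputable def α₁T (n k : ℕ) (v q : ℂ) : ℂ :=
  (xT n k v q + 6 * xT n k v q ^ 2 + 2 * a4T n q) / α₃T n k v q

/-- `α₂(q) = 3x(q) − s'(q) − s'(q)²`. -/
noncomputable def α₂T (n k : ℕ) (v q : ℂ) : ℂ :=
  3 * xT n k v q - s'T n k v q - s'T n k v q ^ 2

/-- `g` is holomorphic on the disc of radius `ε` about `0` and agrees with `f` on the
corresponding punctured disc. -/
def ExtendsHolo (ε : ℝ) (g f : ℂ → ℂ) : Prop :=
  DifferentiableOn ℂ g (Metric.ball (0 : ℂ) ε) ∧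
    ∀ q ∈ Metric.ball (0 : ℂ) ε, q ≠ 0 → g q = f q

open Metric Complex
namespace TateAux



/-- Generic term `a q^p / (1 - c q^e)^d`. -/
noncomputable def T (a c : ℂ) (p e d : ℕ) (q : ℂ) : ℂ := a * q ^ p / (1 - c * q ^ e) ^ d

lemma norm_denom_ge {c q : ℂ} {e : ℕ} (hc : ‖c‖ ≤ 1) (he : 1 ≤ e) (hq : ‖q‖ < 1/2) :
    (1/2 : ℝ) ≤ ‖1 - c * q ^ e‖ := by
  have h1 : ‖c * q ^ e‖ ≤ 1/2 := by
    rw [norm_mul, norm_pow]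
    calc ‖c‖ * ‖q‖ ^ e ≤ 1 * (1/2 : ℝ) ^ e := by
          exact mul_le_mul hc (pow_le_pow_left₀ (norm_nonneg q) hq.le e) (by positivity) one_pos.le
      _ ≤ 1 * (1/2 : ℝ) ^ 1 := by
          exact mul_le_mul_of_nonneg_left (pow_le_pow_of_le_one (by norm_num) (by norm_num) he) one_pos.le
      _ = 1/2 := by norm_num
  calc (1/2 : ℝ) = 1 - 1/2 := by norm_num
    _ ≤ ‖(1:ℂ)‖ - ‖c * q ^ e‖ := by rw [norm_one]; linarith
    _ ≤ ‖1 - c * q ^ e‖ := norm_sub_norm_le _ _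

lemma denom_ne {c q : ℂ} {e : ℕ} (hc : ‖c‖ ≤ 1) (he : 1 ≤ e) (hq : ‖q‖ < 1/2) :
    (1 : ℂ) - c * q ^ e ≠ 0 := by
  intro h
  have := norm_denom_ge hc he hq
  rw [h, norm_zero] at this; linarith

lemma T_bound {c q : ℂ} {e : ℕ} (a : ℂ) (p d : ℕ) (hc : ‖c‖ ≤ 1) (he : 1 ≤ e)
    (hq : ‖q‖ < 1/2) : ‖T a c p e d q‖ ≤ ‖a‖ * (1/2 : ℝ) ^ p * 2 ^ d := by
  rw [T, norm_div, norm_mul, norm_pow, norm_pow]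
  have h1 : ‖a‖ * ‖q‖ ^ p ≤ ‖a‖ * (1/2 : ℝ) ^ p :=
    mul_le_mul_of_nonneg_left (pow_le_pow_left₀ (norm_nonneg q) hq.le p) (norm_nonneg a)
  have h2 : ((1:ℝ)/2) ^ d ≤ ‖1 - c * q ^ e‖ ^ d :=
    pow_le_pow_left₀ (by norm_num) (norm_denom_ge hc he hq) d
  have h3 : (0:ℝ) < ((1:ℝ)/2) ^ d := by positivity
  calc ‖a‖ * ‖q‖ ^ p / ‖1 - c * q ^ e‖ ^ d ≤ (‖a‖ * (1/2:ℝ) ^ p) / ((1/2:ℝ) ^ d) := by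
        exact div_le_div₀ (by positivity) h1 h3 h2
    _ = ‖a‖ * (1/2 : ℝ) ^ p * 2 ^ d := by
        rw [div_eq_mul_inv, ← inv_pow]; norm_num

lemma T_diff {a c : ℂ} {p e d : ℕ}
    (hne : ∀ q : ℂ, ‖q‖ < 1/2 → (1 : ℂ) - c * q ^ e ≠ 0) :
    DifferentiableOn ℂ (T a c p e d) (ball (0:ℂ) (1/2)) := by
  apply DifferentiableOn.div
  · exact (differentiable_const a |>.mul (differentiable_pow p)).differentiableOn
  · exact ((differentiable_const (1:ℂ)).sub ((differentiable_const c).mul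
      (differentiable_pow e))).differentiableOn.pow _
  · intro q hq
    simp only [mem_ball, dist_zero_right] at hq
    exact pow_ne_zero _ (hne q hq)

lemma T_diff' {a c : ℂ} {p e d : ℕ} (hc : ‖c‖ ≤ 1) (he : 1 ≤ e) :
    DifferentiableOn ℂ (T a c p e d) (ball (0:ℂ) (1/2)) :=
  T_diff fun q hq => denom_ne hc he hq


/-- coefficient -/
noncomputable def cc (v : ℂ) (m : ℤ) : ℂ := if 0 ≤ m then v else v⁻¹
/-- exponent -/
def ee (n k : ℕ) (m : ℤ) : ℕ := if 0 ≤ m then n * m.toNat + k else n * (-m).toNat - k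
/-- sign -/
def sg (m : ℤ) : ℂ := if 0 ≤ m then 1 else -1
/-- order -/
def rr (n k : ℕ) : ℕ := min k (n - k)

variable {n k : ℕ} {v : ℂ} {m : ℤ}

lemma norm_cc (hv : ‖v‖ = 1) : ‖cc v m‖ = 1 := by
  rw [cc]; split
  · exact hv
  · rw [norm_inv, hv]; norm_num

lemma norm_sg_cc (hv : ‖v‖ = 1) : ‖sg m * cc v m‖ = 1 := by
  rw [norm_mul, norm_cc hv, sg]; split <;> simp

lemma k_le_mul (hk : k < n) {j : ℕ} (hj : 1 ≤ j) : k ≤ n * j :=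
  le_trans hk.le (Nat.le_mul_of_pos_right n hj)

lemma natAbs_le_ee (hn : 3 ≤ n) (hk : k < n) : m.natAbs ≤ ee n k m := by
  rw [ee]; split_ifs with h
  · have : m.natAbs = m.toNat := by omega
    rw [this]
    have : m.toNat ≤ n * m.toNat := Nat.le_mul_of_pos_left _ (by omega)
    omega
  · have h1 : 1 ≤ (-m).toNat := by omega
    have h2 : m.natAbs = (-m).toNat := by omega
    have h3 : k + (-m).toNat ≤ n * (-m).toNat := by
      calc k + (-m).toNat ≤ (n - 1) + 1 * (-m).toNat := by omega
        _ ≤ (n-1) * (-m).toNat + 1 * (-m).toNat := by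
            have := Nat.le_mul_of_pos_right (n - 1) (show 0 < (-m).toNat by omega)
            omega
        _ = n * (-m).toNat := by
            have : (n - 1) + 1 = n := by omega
            nlinarith [this]
    omega

lemma one_le_ee_of_ne (hn : 3 ≤ n) (hk : k < n) (h : m ≠ 0 ∨ 1 ≤ k) : 1 ≤ ee n k m := by
  rcases h with h | h
  · have := natAbs_le_ee (m := m) hn hk; omega
  · rw [ee]; split_ifs with h2
    · omega
    · have h1 : 1 ≤ (-m).toNat := by omega
      have := k_le_mul (j := (-m).toNat) hk h1
      have h3 : n * 1 ≤ n * (-m).toNat := Nat.mul_le_mul_left n h1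
      omega

lemma rr_le_ee (hk : k < n) : rr n k ≤ ee n k m := by
  rw [rr, ee]; split_ifs with h
  · omega
  · have h1 : 1 ≤ (-m).toNat := by omega
    have h3 : n * 1 ≤ n * (-m).toNat := Nat.mul_le_mul_left n h1
    omega

lemma summable_geo_int : Summable (fun m : ℤ => ((1:ℝ)/2) ^ m.natAbs) := by
  apply Summable.of_nat_of_neg <;> simp only [Int.natAbs_natCast, Int.natAbs_neg] <;>
    exact summable_geometric_of_lt_one (by norm_num) (by norm_num)

lemma summable_aux (C : ℝ) (K : ℝ) :
    Summable (fun m : ℤ => C * ((1:ℝ)/2) ^ m.natAbs + (if m = 0 then K else 0)) := by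
  apply Summable.add (summable_geo_int.mul_left C)
  apply summable_of_ne_finset_zero (s := {0})
  intro m hm
  simp only [Finset.mem_singleton] at hm
  simp [hm]


lemma sigma_bound (N i : ℕ) : ‖∑ d ∈ Nat.divisors N, (d : ℂ) ^ i‖ ≤ (N + 1 : ℝ) ^ (i + 1) := by
  have hsub : Nat.divisors N ⊆ Finset.range (N + 1) := by
    intro d hd
    exact Finset.mem_range.2 (Nat.lt_succ_of_le (Nat.divisor_le hd))
  calc ‖∑ d ∈ Nat.divisors N, (d : ℂ) ^ i‖ ≤ ∑ d ∈ Nat.divisors N, ‖(d : ℂ) ^ i‖ :=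
        norm_sum_le _ _
    _ ≤ ∑ _d ∈ Nat.divisors N, (N : ℝ) ^ i := by
        apply Finset.sum_le_sum
        intro d hd
        rw [norm_pow, Complex.norm_natCast]
        exact pow_le_pow_left₀ (by positivity) (Nat.cast_le.2 (Nat.divisor_le hd)) i
    _ = (Nat.divisors N).card * (N : ℝ) ^ i := by rw [Finset.sum_const, nsmul_eq_mul]
    _ ≤ (N + 1 : ℝ) * (N + 1 : ℝ) ^ i := by
        apply mul_le_mul
        · have := Finset.card_le_card hsub
          rw [Finset.card_range] at this
          exact_mod_cast le_trans (Nat.cast_le.2 this) (by norm_num)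
        · exact pow_le_pow_left₀ (by positivity) (by norm_num) i
        · positivity
        · positivity
    _ = (N + 1 : ℝ) ^ (i + 1) := by ring

/-- summability of the polynomially-weighted geometric bound -/
lemma summable_poly_geo (i : ℕ) (c : ℝ) :
    Summable (fun m : ℕ => c * ((m : ℝ) + 2) ^ i * ((1:ℝ)/2) ^ (m + 1)) := by
  have h : Summable (fun m : ℕ => ((m:ℝ)) ^ i * ((1:ℝ)/2) ^ m) := by
    simpa using summable_pow_mul_geometric_of_norm_lt_one (R := ℝ) i
      (r := (1:ℝ)/2) (by rw [Real.norm_eq_abs]; rw [abs_of_pos] <;> norm_num)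
  have h2 : Summable (fun m : ℕ => ((m:ℝ) + 2) ^ i * ((1:ℝ)/2) ^ (m + 2)) := by
    have := (summable_nat_add_iff 2).2 h
    simpa [Nat.cast_add] using this
  have h3 : Summable (fun m : ℕ => (2 * c) * (((m:ℝ) + 2) ^ i * ((1:ℝ)/2) ^ (m + 2))) :=
    h2.mul_left (2 * c)
  apply h3.congr
  intro m
  rw [pow_succ, pow_succ]
  ring


noncomputable def FX (n k : ℕ) (v : ℂ) (m : ℤ) : ℂ → ℂ :=
  T (cc v m) (cc v m) (ee n k m) (ee n k m) 2

noncomputable def FY (n k : ℕ) (v : ℂ) (m : ℤ) : ℂ → ℂ :=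
  if 0 ≤ m then T ((cc v m) ^ 2) (cc v m) (2 * ee n k m) (ee n k m) 3
  else T (-(cc v m)) (cc v m) (ee n k m) (ee n k m) 3

noncomputable def Fh (n k : ℕ) (v : ℂ) (m : ℤ) (q : ℂ) : ℂ :=
  T (sg m * cc v m) (cc v m) (ee n k m - rr n k) (ee n k m) 3 q
  + T (sg m * (cc v m) ^ 2) (cc v m) (2 * ee n k m - rr n k) (ee n k m) 3 q

noncomputable def HXt (n k : ℕ) (v : ℂ) (m : ℤ) : ℂ → ℂ :=
  T (cc v m) (cc v m) (ee n k m - rr n k) (ee n k m) 2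

noncomputable def Pt (i n r : ℕ) (m : ℕ) (q : ℂ) : ℂ :=
  (∑ d ∈ Nat.divisors (m + 1), (d : ℂ) ^ i) * q ^ (n * (m + 1) - r)

variable {n k : ℕ} {v : ℂ} {m : ℤ}

lemma half_pow_factor {r e : ℕ} (h : r ≤ e) : ((1:ℝ)/2) ^ (e - r) = 2 ^ r * ((1:ℝ)/2) ^ e := by
  have h1 : ((1:ℝ)/2) ^ (e - r) * ((1:ℝ)/2) ^ r = ((1:ℝ)/2) ^ e := by
    rw [← pow_add]; congr 1; omega
  calc ((1:ℝ)/2) ^ (e - r) = (((1:ℝ)/2) ^ (e - r) * ((1:ℝ)/2) ^ r) * 2 ^ r := by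
        rw [mul_assoc, ← mul_pow]; norm_num
    _ = 2 ^ r * ((1:ℝ)/2) ^ e := by rw [h1]; ring

lemma half_pow_le {a b : ℕ} (h : a ≤ b) : ((1:ℝ)/2) ^ b ≤ ((1:ℝ)/2) ^ a :=
  pow_le_pow_of_le_one (by norm_num) (by norm_num) h

lemma rr_le_n (hk : k < n) : rr n k ≤ n := by rw [rr]; omega

/-- For `k = 0`, the `m = 0` term of `FX` is constant. -/
lemma FX_const (hk0 : k = 0) (q : ℂ) : FX n k v 0 q = FX n k v 0 0 := by
  simp [FX, T, ee, hk0]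

lemma FY_const (hk0 : k = 0) (q : ℂ) : FY n k v 0 q = FY n k v 0 0 := by
  simp [FY, T, ee, hk0]

lemma FX_bound (hn : 3 ≤ n) (hk : k < n) (hv : ‖v‖ = 1) {q : ℂ} (hq : ‖q‖ < 1/2) (m : ℤ) :
    ‖FX n k v m q‖ ≤ 4 * ((1:ℝ)/2) ^ m.natAbs + (if m = 0 then ‖FX n k v 0 0‖ else 0) := by
  by_cases he : 1 ≤ ee n k m
  · have h1 : ‖FX n k v m q‖ ≤ ‖cc v m‖ * ((1:ℝ)/2) ^ (ee n k m) * 2 ^ 2 :=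
      T_bound _ _ _ (le_of_eq (norm_cc hv)) he hq
    rw [norm_cc hv] at h1
    have h2 : ((1:ℝ)/2) ^ (ee n k m) ≤ ((1:ℝ)/2) ^ m.natAbs := half_pow_le (natAbs_le_ee hn hk)
    have h3 : (0:ℝ) ≤ (if m = 0 then ‖FX n k v 0 0‖ else 0) := by positivity
    nlinarith [pow_nonneg (show (0:ℝ) ≤ 1/2 by norm_num) m.natAbs]
  · have hm0 : m = 0 ∧ k = 0 := by
      by_contra hcon
      exact he (one_le_ee_of_ne hn hk (by omega))
    rw [hm0.1, FX_const hm0.2]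
    norm_num

lemma FY_bound (hn : 3 ≤ n) (hk : k < n) (hv : ‖v‖ = 1) {q : ℂ} (hq : ‖q‖ < 1/2) (m : ℤ) :
    ‖FY n k v m q‖ ≤ 8 * ((1:ℝ)/2) ^ m.natAbs + (if m = 0 then ‖FY n k v 0 0‖ else 0) := by
  by_cases he : 1 ≤ ee n k m
  · have key : ‖FY n k v m q‖ ≤ ((1:ℝ)/2) ^ (ee n k m) * 2 ^ 3 := by
      rw [FY]; split_ifs with hm
      · have h1 := T_bound (c := cc v m) (q := q) ((cc v m) ^ 2) (2 * ee n k m) 3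
          (le_of_eq (norm_cc hv)) he hq
        rw [norm_pow, norm_cc hv, one_pow, one_mul] at h1
        refine h1.trans ?_
        have : ((1:ℝ)/2) ^ (2 * ee n k m) ≤ ((1:ℝ)/2) ^ (ee n k m) := half_pow_le (by omega)
        nlinarith
      · have h1 := T_bound (c := cc v m) (q := q) (-(cc v m)) (ee n k m) 3
          (le_of_eq (norm_cc hv)) he hq
        rw [norm_neg, norm_cc hv, one_mul] at h1
        exact h1
    have h2 : ((1:ℝ)/2) ^ (ee n k m) ≤ ((1:ℝ)/2) ^ m.natAbs := half_pow_le (natAbs_le_ee hn hk)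
    have h3 : (0:ℝ) ≤ (if m = 0 then ‖FY n k v 0 0‖ else 0) := by positivity
    nlinarith
  · have hm0 : m = 0 ∧ k = 0 := by
      by_contra hcon
      exact he (one_le_ee_of_ne hn hk (by omega))
    rw [hm0.1, FY_const hm0.2]
    norm_num

lemma Fh_bound (hn : 3 ≤ n) (hk : k < n) (hv : ‖v‖ = 1) (hk1 : 1 ≤ k)
    {q : ℂ} (hq : ‖q‖ < 1/2) (m : ℤ) :
    ‖Fh n k v m q‖ ≤ 16 * 2 ^ n * ((1:ℝ)/2) ^ m.natAbs := by
  unfold Fh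
  have he : 1 ≤ ee n k m := one_le_ee_of_ne hn hk (Or.inr hk1)
  have hre : rr n k ≤ ee n k m := rr_le_ee hk
  have hb1 := T_bound (c := cc v m) (q := q) (sg m * cc v m) (ee n k m - rr n k) 3
      (le_of_eq (norm_cc hv)) he hq
  have hb2 := T_bound (c := cc v m) (q := q) (sg m * (cc v m) ^ 2) (2 * ee n k m - rr n k) 3
      (le_of_eq (norm_cc hv)) he hq
  rw [norm_sg_cc hv, one_mul] at hb1
  have hnsg : ‖sg m * (cc v m) ^ 2‖ = 1 := by
    rw [norm_mul, norm_pow, norm_cc hv, sg]; split <;> simp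
  rw [hnsg, one_mul] at hb2
  have hkey : ((1:ℝ)/2) ^ (ee n k m - rr n k) ≤ 2 ^ n * ((1:ℝ)/2) ^ m.natAbs := by
    rw [half_pow_factor hre]
    have h1 : (2:ℝ) ^ (rr n k) ≤ 2 ^ n := pow_le_pow_right₀ (by norm_num) (rr_le_n hk)
    have h2 : ((1:ℝ)/2) ^ (ee n k m) ≤ ((1:ℝ)/2) ^ m.natAbs := half_pow_le (natAbs_le_ee hn hk)
    have h3 : (0:ℝ) < 2 ^ (rr n k) := by positivity
    nlinarith [pow_nonneg (show (0:ℝ) ≤ 1/2 by norm_num) (ee n k m),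
      pow_pos (show (0:ℝ) < 2 by norm_num) n]
  have hkey2 : ((1:ℝ)/2) ^ (2 * ee n k m - rr n k) ≤ ((1:ℝ)/2) ^ (ee n k m - rr n k) :=
    half_pow_le (by omega)
  calc ‖T (sg m * cc v m) (cc v m) (ee n k m - rr n k) (ee n k m) 3 q
      + T (sg m * (cc v m) ^ 2) (cc v m) (2 * ee n k m - rr n k) (ee n k m) 3 q‖ ≤ ‖T (sg m * cc v m) (cc v m) (ee n k m - rr n k) (ee n k m) 3 q‖
        + ‖T (sg m * (cc v m) ^ 2) (cc v m) (2 * ee n k m - rr n k) (ee n k m) 3 q‖ :=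
        norm_add_le _ _
    _ ≤ ((1:ℝ)/2) ^ (ee n k m - rr n k) * 2 ^ 3 + ((1:ℝ)/2) ^ (2*ee n k m - rr n k) * 2 ^ 3 := by
        linarith
    _ ≤ 16 * ((1:ℝ)/2) ^ (ee n k m - rr n k) := by nlinarith
    _ ≤ 16 * (2 ^ n * ((1:ℝ)/2) ^ m.natAbs) := by nlinarith
    _ = 16 * 2 ^ n * ((1:ℝ)/2) ^ m.natAbs := by ring

lemma HXt_bound (hn : 3 ≤ n) (hk : k < n) (hv : ‖v‖ = 1) (hk1 : 1 ≤ k)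
    {q : ℂ} (hq : ‖q‖ < 1/2) (m : ℤ) :
    ‖HXt n k v m q‖ ≤ 4 * 2 ^ n * ((1:ℝ)/2) ^ m.natAbs := by
  unfold HXt
  have he : 1 ≤ ee n k m := one_le_ee_of_ne hn hk (Or.inr hk1)
  have hre : rr n k ≤ ee n k m := rr_le_ee hk
  have hb1 := T_bound (c := cc v m) (q := q) (cc v m) (ee n k m - rr n k) 2
      (le_of_eq (norm_cc hv)) he hq
  rw [norm_cc hv, one_mul] at hb1
  have hkey : ((1:ℝ)/2) ^ (ee n k m - rr n k) ≤ 2 ^ n * ((1:ℝ)/2) ^ m.natAbs := by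
    rw [half_pow_factor hre]
    have h1 : (2:ℝ) ^ (rr n k) ≤ 2 ^ n := pow_le_pow_right₀ (by norm_num) (rr_le_n hk)
    have h2 : ((1:ℝ)/2) ^ (ee n k m) ≤ ((1:ℝ)/2) ^ m.natAbs := half_pow_le (natAbs_le_ee hn hk)
    have h3 : (0:ℝ) < 2 ^ (rr n k) := by positivity
    nlinarith [pow_nonneg (show (0:ℝ) ≤ 1/2 by norm_num) (ee n k m),
      pow_pos (show (0:ℝ) < 2 by norm_num) n]
  nlinarith [pow_pos (show (0:ℝ) < 2 by norm_num) 2]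

lemma Pt_bound {i r : ℕ} (hn1 : 1 ≤ n) (hr : r ≤ n) {q : ℂ} (hq : ‖q‖ < 1/2) (m : ℕ) :
    ‖Pt i n r m q‖ ≤ 2 ^ n * ((m:ℝ) + 2) ^ (i + 1) * ((1:ℝ)/2) ^ (m + 1) := by
  have hrn : r ≤ n * (m + 1) := le_trans hr (Nat.le_mul_of_pos_right n (by omega))
  rw [Pt, norm_mul, norm_pow]
  have h1 : ‖∑ d ∈ Nat.divisors (m + 1), (d : ℂ) ^ i‖ ≤ ((m:ℝ) + 2) ^ (i + 1) := by
    have h := sigma_bound (m + 1) i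
    push_cast at h
    have e : ((m:ℝ) + 2) ^ (i + 1) = ((m:ℝ) + 1 + 1) ^ (i + 1) := by ring
    rw [e]; exact h
  have h2 : ‖q‖ ^ (n * (m + 1) - r) ≤ ((1:ℝ)/2) ^ (n * (m + 1) - r) :=
    pow_le_pow_left₀ (norm_nonneg q) hq.le _
  have h3 : ((1:ℝ)/2) ^ (n * (m + 1) - r) ≤ 2 ^ n * ((1:ℝ)/2) ^ (m + 1) := by
    rw [half_pow_factor hrn]
    have h4 : (2:ℝ) ^ r ≤ 2 ^ n := pow_le_pow_right₀ (by norm_num) hr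
    have h5 : ((1:ℝ)/2) ^ (n * (m + 1)) ≤ ((1:ℝ)/2) ^ (m + 1) := by
      apply half_pow_le
      calc m + 1 = 1 * (m + 1) := by ring
        _ ≤ n * (m + 1) := by
            exact Nat.mul_le_mul hn1 (le_refl (m + 1))
    nlinarith [pow_nonneg (show (0:ℝ) ≤ 1/2 by norm_num) (n * (m+1)),
      pow_pos (show (0:ℝ) < 2 by norm_num) r]
  calc ‖∑ d ∈ Nat.divisors (m + 1), (d : ℂ) ^ i‖ * ‖q‖ ^ (n * (m + 1) - r)
      ≤ ((m:ℝ) + 2) ^ (i + 1) * ((1:ℝ)/2) ^ (n * (m + 1) - r) := by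
        apply mul_le_mul h1 h2 (by positivity) (by positivity)
    _ ≤ ((m:ℝ) + 2) ^ (i + 1) * (2 ^ n * ((1:ℝ)/2) ^ (m + 1)) := by
        nlinarith [pow_nonneg (show (0:ℝ) ≤ ((m:ℝ)+2) by positivity) (i+1)]
    _ = 2 ^ n * ((m:ℝ) + 2) ^ (i + 1) * ((1:ℝ)/2) ^ (m + 1) := by ring


noncomputable def SX (n k : ℕ) (v : ℂ) (q : ℂ) : ℂ := ∑' m : ℤ, FX n k v m q
noncomputable def SY (n k : ℕ) (v : ℂ) (q : ℂ) : ℂ := ∑' m : ℤ, FY n k v m q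
noncomputable def Sh (n k : ℕ) (v : ℂ) (q : ℂ) : ℂ := ∑' m : ℤ, Fh n k v m q
noncomputable def SHX (n k : ℕ) (v : ℂ) (q : ℂ) : ℂ := ∑' m : ℤ, HXt n k v m q
noncomputable def SP (i n r : ℕ) (q : ℂ) : ℂ := ∑' m : ℕ, Pt i n r m q

variable {n k : ℕ} {v : ℂ} {m : ℤ}

lemma FX_diff (hn : 3 ≤ n) (hk : k < n) (hv : ‖v‖ = 1) (hv1 : k = 0 → v ≠ 1) (m : ℤ) :
    DifferentiableOn ℂ (FX n k v m) (ball (0:ℂ) (1/2)) := by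
  by_cases he : 1 ≤ ee n k m
  · exact T_diff' (le_of_eq (norm_cc hv)) he
  · have hm0 : m = 0 ∧ k = 0 := by
      by_contra hcon
      exact he (one_le_ee_of_ne hn hk (by omega))
    apply T_diff
    intro q _
    have he0 : ee n k m = 0 := by omega
    rw [he0, hm0.1]
    simp only [pow_zero, mul_one, cc, if_pos le_rfl]
    exact sub_ne_zero.mpr (Ne.symm (hv1 hm0.2))

lemma FY_diff (hn : 3 ≤ n) (hk : k < n) (hv : ‖v‖ = 1) (hv1 : k = 0 → v ≠ 1) (m : ℤ) :
    DifferentiableOn ℂ (FY n k v m) (ball (0:ℂ) (1/2)) := by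
  have key : ∀ q : ℂ, ‖q‖ < 1/2 → (1:ℂ) - cc v m * q ^ (ee n k m) ≠ 0 := by
    intro q hq
    by_cases he : 1 ≤ ee n k m
    · exact denom_ne (le_of_eq (norm_cc hv)) he hq
    · have hm0 : m = 0 ∧ k = 0 := by
        by_contra hcon
        exact he (one_le_ee_of_ne hn hk (by omega))
      have he0 : ee n k m = 0 := by omega
      rw [he0, hm0.1]
      simp only [pow_zero, mul_one, cc, if_pos le_rfl]
      exact sub_ne_zero.mpr (Ne.symm (hv1 hm0.2))
  rw [FY]; split_ifs with hm
  · exact T_diff key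
  · exact T_diff key

lemma Fh_diff (hv : ‖v‖ = 1) (hn : 3 ≤ n) (hk : k < n) (hk1 : 1 ≤ k) (m : ℤ) :
    DifferentiableOn ℂ (Fh n k v m) (ball (0:ℂ) (1/2)) := by
  have he : 1 ≤ ee n k m := one_le_ee_of_ne hn hk (Or.inr hk1)
  exact (T_diff' (le_of_eq (norm_cc hv)) he).add (T_diff' (le_of_eq (norm_cc hv)) he)

lemma HXt_diff (hv : ‖v‖ = 1) (hn : 3 ≤ n) (hk : k < n) (hk1 : 1 ≤ k) (m : ℤ) :
    DifferentiableOn ℂ (HXt n k v m) (ball (0:ℂ) (1/2)) :=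
  T_diff' (le_of_eq (norm_cc hv)) (one_le_ee_of_ne hn hk (Or.inr hk1))

lemma Pt_diff (i r : ℕ) (m : ℕ) : DifferentiableOn ℂ (Pt i n r m) (ball (0:ℂ) (1/2)) :=
  ((differentiable_const _).mul (differentiable_pow _)).differentiableOn

lemma SX_diff (hn : 3 ≤ n) (hk : k < n) (hv : ‖v‖ = 1) (hv1 : k = 0 → v ≠ 1) :
    DifferentiableOn ℂ (SX n k v) (ball (0:ℂ) (1/2)) := by
  unfold SX
  apply differentiableOn_tsum_of_summable_norm (summable_aux 4 ‖FX n k v 0 0‖)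
    (FX_diff hn hk hv hv1) isOpen_ball
  intro m q hq
  rw [mem_ball, dist_zero_right] at hq
  exact FX_bound hn hk hv hq m

lemma SY_diff (hn : 3 ≤ n) (hk : k < n) (hv : ‖v‖ = 1) (hv1 : k = 0 → v ≠ 1) :
    DifferentiableOn ℂ (SY n k v) (ball (0:ℂ) (1/2)) := by
  unfold SY
  apply differentiableOn_tsum_of_summable_norm (summable_aux 8 ‖FY n k v 0 0‖)
    (FY_diff hn hk hv hv1) isOpen_ball
  intro m q hq
  rw [mem_ball, dist_zero_right] at hq
  exact FY_bound hn hk hv hq m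

lemma Sh_diff (hn : 3 ≤ n) (hk : k < n) (hv : ‖v‖ = 1) (hk1 : 1 ≤ k) :
    DifferentiableOn ℂ (Sh n k v) (ball (0:ℂ) (1/2)) := by
  unfold Sh
  apply differentiableOn_tsum_of_summable_norm (summable_geo_int.mul_left (16 * 2 ^ n))
    (Fh_diff hv hn hk hk1) isOpen_ball
  intro m q hq
  rw [mem_ball, dist_zero_right] at hq
  exact Fh_bound hn hk hv hk1 hq m

lemma SHX_diff (hn : 3 ≤ n) (hk : k < n) (hv : ‖v‖ = 1) (hk1 : 1 ≤ k) :
    DifferentiableOn ℂ (SHX n k v) (ball (0:ℂ) (1/2)) := by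
  unfold SHX
  apply differentiableOn_tsum_of_summable_norm (summable_geo_int.mul_left (4 * 2 ^ n))
    (HXt_diff hv hn hk hk1) isOpen_ball
  intro m q hq
  rw [mem_ball, dist_zero_right] at hq
  exact HXt_bound hn hk hv hk1 hq m

lemma SP_diff {i r : ℕ} (hn1 : 1 ≤ n) (hr : r ≤ n) :
    DifferentiableOn ℂ (SP i n r) (ball (0:ℂ) (1/2)) := by
  unfold SP
  apply differentiableOn_tsum_of_summable_norm (summable_poly_geo (i + 1) (2 ^ n))
    (fun m => Pt_diff i r m) isOpen_ball
  intro m q hq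
  rw [mem_ball, dist_zero_right] at hq
  exact Pt_bound (i := i) hn1 hr hq m

lemma FX_summable (hn : 3 ≤ n) (hk : k < n) (hv : ‖v‖ = 1) {q : ℂ} (hq : ‖q‖ < 1/2) :
    Summable (fun m : ℤ => FX n k v m q) :=
  Summable.of_norm_bounded (summable_aux 4 ‖FX n k v 0 0‖) (FX_bound hn hk hv hq)

lemma FY_summable (hn : 3 ≤ n) (hk : k < n) (hv : ‖v‖ = 1) {q : ℂ} (hq : ‖q‖ < 1/2) :
    Summable (fun m : ℤ => FY n k v m q) :=
  Summable.of_norm_bounded (summable_aux 8 ‖FY n k v 0 0‖) (FY_bound hn hk hv hq)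

lemma Fh_summable (hn : 3 ≤ n) (hk : k < n) (hv : ‖v‖ = 1) (hk1 : 1 ≤ k) {q : ℂ}
    (hq : ‖q‖ < 1/2) : Summable (fun m : ℤ => Fh n k v m q) :=
  Summable.of_norm_bounded (summable_geo_int.mul_left (16 * 2 ^ n))
    (Fh_bound hn hk hv hk1 hq)

lemma HXt_summable (hn : 3 ≤ n) (hk : k < n) (hv : ‖v‖ = 1) (hk1 : 1 ≤ k) {q : ℂ}
    (hq : ‖q‖ < 1/2) : Summable (fun m : ℤ => HXt n k v m q) :=
  Summable.of_norm_bounded (summable_geo_int.mul_left (4 * 2 ^ n))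
    (HXt_bound hn hk hv hk1 hq)


variable {n k : ℕ} {v q : ℂ} {m : ℤ}

lemma one_sub_inv (u : ℂ) (hu : u ≠ 0) : 1 - u⁻¹ = (u - 1) / u := by
  field_simp

lemma inv_X (u : ℂ) (hu : u ≠ 0) : u⁻¹ / (1 - u⁻¹) ^ 2 = u / (1 - u) ^ 2 := by
  rw [one_sub_inv u hu, div_pow, div_div_eq_mul_div]
  have h3 : u⁻¹ * u ^ 2 = u := by
    rw [sq, ← mul_assoc, inv_mul_cancel₀ hu, one_mul]
  have h4 : (u - 1) ^ 2 = (1 - u) ^ 2 := by ring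
  rw [h3, h4]

lemma inv_Y (u : ℂ) (hu : u ≠ 0) : (u⁻¹) ^ 2 / (1 - u⁻¹) ^ 3 = -u / (1 - u) ^ 3 := by
  rw [one_sub_inv u hu, div_pow, div_div_eq_mul_div]
  have h3 : (u⁻¹) ^ 2 * u ^ 3 = u := by
    have h : (u⁻¹) ^ 2 * u ^ 3 = (u⁻¹ * u) ^ 2 * u := by ring
    rw [h, inv_mul_cancel₀ hu, one_pow, one_mul]
  have h4 : (u - 1) ^ 3 = -((1 - u) ^ 3) := by ring
  rw [h3, h4, div_neg, ← neg_div]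

lemma cc_ne (hv0 : v ≠ 0) : cc v m ≠ 0 := by
  rw [cc]; split
  · exact hv0
  · exact inv_ne_zero hv0

lemma w_eq_pos (hm : 0 ≤ m) : ((q ^ n : ℂ) ^ m) * (v * q ^ k) = cc v m * q ^ (ee n k m) := by
  obtain ⟨j, rfl⟩ := Int.eq_ofNat_of_zero_le hm
  rw [zpow_natCast, ← pow_mul, cc, ee, if_pos hm, if_pos hm, Int.toNat_natCast, pow_add]
  ring

lemma w_eq_neg (hq : q ≠ 0) (hv0 : v ≠ 0) (hk : k < n) (hm : ¬ 0 ≤ m) :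
    ((q ^ n : ℂ) ^ m) * (v * q ^ k) = (cc v m * q ^ (ee n k m))⁻¹ := by
  rw [cc, if_neg hm, ee, if_neg hm]
  set j := (-m).toNat with hj
  have hj1 : 1 ≤ j := by omega
  have hm' : m = -(j : ℤ) := by omega
  have hkle : k ≤ n * j := k_le_mul hk hj1
  have hq' : (q : ℂ) ^ (n * j) ≠ 0 := pow_ne_zero _ hq
  rw [hm', zpow_neg, zpow_natCast, ← pow_mul]
  have hpow : q ^ (n * j - k) * q ^ k = q ^ (n * j) := by rw [← pow_add]; congr 1; omega
  apply eq_inv_of_mul_eq_one_left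
  calc ((q ^ (n * j))⁻¹ * (v * q ^ k)) * (v⁻¹ * q ^ (n * j - k))
      = (v⁻¹ * v) * ((q ^ (n * j - k) * q ^ k) * (q ^ (n * j))⁻¹) := by ring
    _ = 1 := by rw [hpow, inv_mul_cancel₀ hv0, mul_inv_cancel₀ hq', one_mul]

lemma term_eq_X (hq : q ≠ 0) (hv0 : v ≠ 0) (hk : k < n) (m : ℤ) :
    ((q ^ n : ℂ) ^ m) * (v * q ^ k) / (1 - ((q ^ n : ℂ) ^ m) * (v * q ^ k)) ^ 2
      = FX n k v m q := by
  rcases le_or_gt 0 m with hm | hm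
  · rw [w_eq_pos hm]; rfl
  · rw [w_eq_neg hq hv0 hk (not_le.mpr hm)]
    have hu : cc v m * q ^ (ee n k m) ≠ 0 := mul_ne_zero (cc_ne hv0) (pow_ne_zero _ hq)
    rw [FX, T]
    exact inv_X _ hu

lemma term_eq_Y (hq : q ≠ 0) (hv0 : v ≠ 0) (hk : k < n) (m : ℤ) :
    (((q ^ n : ℂ) ^ m) * (v * q ^ k)) ^ 2 / (1 - ((q ^ n : ℂ) ^ m) * (v * q ^ k)) ^ 3
      = FY n k v m q := by
  rcases le_or_gt 0 m with hm | hm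
  · rw [w_eq_pos hm, FY, if_pos hm, T]
    congr 1
    rw [mul_pow, ← pow_mul, mul_comm (ee n k m) 2]
  · rw [w_eq_neg hq hv0 hk (not_le.mpr hm)]
    have hu : cc v m * q ^ (ee n k m) ≠ 0 := mul_ne_zero (cc_ne hv0) (pow_ne_zero _ hq)
    rw [FY, if_neg (not_le.mpr hm), T, neg_mul]
    exact inv_Y _ hu

lemma pow_collapse {a : ℂ} {r E : ℕ} (h : r ≤ E) (q D : ℂ) :
    q ^ r * (a * q ^ (E - r) / D) = a * q ^ E / D := by
  have h1 : q ^ r * q ^ (E - r) = q ^ E := by rw [← pow_add]; congr 1; omega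
  calc q ^ r * (a * q ^ (E - r) / D) = a * (q ^ r * q ^ (E - r)) / D := by ring
    _ = a * q ^ E / D := by rw [h1]

lemma pow_collapse' {a : ℂ} {r E : ℕ} (h : r ≤ E) (q : ℂ) :
    q ^ r * (a * q ^ (E - r)) = a * q ^ E := by
  have h1 : q ^ r * q ^ (E - r) = q ^ E := by rw [← pow_add]; congr 1; omega
  calc q ^ r * (a * q ^ (E - r)) = a * (q ^ r * q ^ (E - r)) := by ring
    _ = a * q ^ E := by rw [h1]

lemma HX_combine (hk : k < n) (q : ℂ) (m : ℤ) :
    q ^ (rr n k) * HXt n k v m q = FX n k v m q := by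
  simp only [HXt, FX, T]
  exact pow_collapse (rr_le_ee hk) q _

lemma Pt_combine {i r : ℕ} (hr : r ≤ n) (hn1 : 1 ≤ n) (q : ℂ) (m : ℕ) :
    q ^ r * Pt i n r m q = Pt i n 0 m q := by
  simp only [Pt, Nat.sub_zero]
  exact pow_collapse' (le_trans hr (Nat.le_mul_of_pos_right n (by omega))) q

lemma H_combine (hn : 3 ≤ n) (hk : k < n) (hv : ‖v‖ = 1) (hk1 : 1 ≤ k)
    (hq : ‖q‖ < 1/2) (m : ℤ) :
    q ^ (rr n k) * Fh n k v m q = FX n k v m q + 2 * FY n k v m q := by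
  have he : 1 ≤ ee n k m := one_le_ee_of_ne hn hk (Or.inr hk1)
  have hre : rr n k ≤ ee n k m := rr_le_ee hk
  have hw : (1 : ℂ) - cc v m * q ^ (ee n k m) ≠ 0 :=
    denom_ne (le_of_eq (norm_cc hv)) he hq
  have h2E : (q : ℂ) ^ (2 * ee n k m) = (q ^ ee n k m) ^ 2 := by
    rw [← pow_mul, mul_comm]
  rcases le_or_gt 0 m with hm | hm
  · simp only [Fh, FX, FY, if_pos hm, sg, T]
    rw [mul_add, pow_collapse hre, pow_collapse (by omega : rr n k ≤ 2 * ee n k m), h2E]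
    generalize hgen : (q : ℂ) ^ ee n k m = W
    rw [hgen] at hw
    field_simp
    ring
  · have hm' : ¬ (0 ≤ m) := not_le.mpr hm
    simp only [Fh, FX, FY, if_neg hm', sg, T]
    rw [mul_add, pow_collapse hre, pow_collapse (by omega : rr n k ≤ 2 * ee n k m), h2E]
    generalize hgen : (q : ℂ) ^ ee n k m = W
    rw [hgen] at hw
    field_simp
    ring


variable {n k : ℕ} {v q : ℂ} {m : ℤ}

lemma T_zero_pos {a c : ℂ} {p e d : ℕ} (hp : 1 ≤ p) : T a c p e d 0 = 0 := by
  rw [T, zero_pow (by omega : p ≠ 0), mul_zero, zero_div]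

lemma ee_zero : ee n k 0 = k := by simp [ee]

lemma ee_negone : ee n k (-1) = n - k := by
  rw [ee, if_neg (by norm_num)]
  norm_num

lemma cc_zero : cc v 0 = v := by simp [cc]

lemma cc_negone : cc v (-1) = v⁻¹ := by rw [cc, if_neg (by norm_num)]

lemma sg_zero : sg 0 = 1 := by simp [sg]

lemma sg_negone : sg (-1) = -1 := by rw [sg, if_neg (by norm_num)]

lemma FX_zero (he : 1 ≤ ee n k m) : FX n k v m 0 = 0 := by
  rw [FX]; exact T_zero_pos he

lemma FY_zero (he : 1 ≤ ee n k m) : FY n k v m 0 = 0 := by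
  rw [FY]; split_ifs <;> apply T_zero_pos <;> omega

lemma Fh_zero (hn : 3 ≤ n) (hk : k < n) (hk1 : 1 ≤ k) (m : ℤ) :
    Fh n k v m 0 = if ee n k m = rr n k then sg m * cc v m else 0 := by
  have he : 1 ≤ ee n k m := one_le_ee_of_ne hn hk (Or.inr hk1)
  have hre : rr n k ≤ ee n k m := rr_le_ee hk
  rw [Fh]
  rw [T_zero_pos (by omega : 1 ≤ 2 * ee n k m - rr n k), add_zero]
  by_cases h : ee n k m = rr n k
  · rw [if_pos h]
    have hp : ee n k m - rr n k = 0 := by omega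
    rw [T, hp, pow_zero, mul_one, zero_pow (by omega : ee n k m ≠ 0), mul_zero, sub_zero,
      one_pow, div_one]
  · rw [if_neg h, T, zero_pow (by omega : ee n k m - rr n k ≠ 0), mul_zero, zero_div]

lemma ee_ne_rr (hn : 3 ≤ n) (hk : k < n) (hm : m ≠ 0) (hm1 : m ≠ -1) :
    ee n k m ≠ rr n k := by
  rcases le_or_gt 0 m with h | h
  · have h1 : 1 ≤ m.toNat := by omega
    have h2 : n ≤ n * m.toNat := Nat.le_mul_of_pos_right n (by omega)
    rw [ee, if_pos h, rr]
    omega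
  · have h1 : 2 ≤ (-m).toNat := by omega
    have h2 : n * 2 ≤ n * (-m).toNat := Nat.mul_le_mul_left n h1
    rw [ee, if_neg (by omega), rr]
    omega

lemma SX_zero_k0 (hn : 3 ≤ n) (hk : k < n) (hk0 : k = 0) :
    SX n k v 0 = v / (1 - v) ^ 2 := by
  rw [SX, tsum_eq_single 0 (fun m hm => FX_zero (one_le_ee_of_ne hn hk (Or.inl hm)))]
  subst hk0
  simp [FX, T, ee, cc]

lemma SY_zero_k0 (hn : 3 ≤ n) (hk : k < n) (hk0 : k = 0) :
    SY n k v 0 = v ^ 2 / (1 - v) ^ 3 := by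
  rw [SY, tsum_eq_single 0 (fun m hm => FY_zero (one_le_ee_of_ne hn hk (Or.inl hm)))]
  subst hk0
  simp [FY, T, ee, cc]

lemma Sh_zero (hn : 3 ≤ n) (hk : k < n) (hk1 : 1 ≤ k) :
    Sh n k v 0 = (if k = rr n k then v else 0) + (if n - k = rr n k then -v⁻¹ else 0) := by
  rw [Sh, tsum_eq_sum (s := ({0, -1} : Finset ℤ))
    (fun m hm => by
      rw [Fh_zero hn hk hk1, if_neg]
      simp only [Finset.mem_insert, Finset.mem_singleton] at hm
      push_neg at hm
      exact ee_ne_rr hn hk hm.1 hm.2)]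
  rw [Finset.sum_pair (by decide : (0:ℤ) ≠ -1)]
  rw [Fh_zero hn hk hk1, Fh_zero hn hk hk1, ee_zero, ee_negone, cc_zero, cc_negone,
    sg_zero, sg_negone]
  congr 1
  · split_ifs <;> simp
  · split_ifs <;> simp

lemma SX_factor (hk : k < n) (q : ℂ) : SX n k v q = q ^ rr n k * SHX n k v q := by
  rw [SX, SHX, ← tsum_mul_left]
  exact tsum_congr fun m => (HX_combine hk q m).symm

lemma SP_factor {i : ℕ} (r : ℕ) (hr : r ≤ n) (hn1 : 1 ≤ n) (q : ℂ) :
    SP i n 0 q = q ^ r * SP i n r q := by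
  rw [SP, SP, ← tsum_mul_left]
  exact tsum_congr fun m => (Pt_combine hr hn1 q m).symm

lemma Sxy_factor (hn : 3 ≤ n) (hk : k < n) (hv : ‖v‖ = 1) (hk1 : 1 ≤ k)
    (hq : ‖q‖ < 1/2) : SX n k v q + 2 * SY n k v q = q ^ rr n k * Sh n k v q := by
  rw [Sh, ← tsum_mul_left]
  rw [tsum_congr (fun m => H_combine hn hk hv hk1 hq m)]
  rw [Summable.tsum_add (FX_summable hn hk hv hq) ((FY_summable hn hk hv hq).mul_left 2),
    tsum_mul_left]
  rfl

lemma s1_eq (q : ℂ) : s1ser (q ^ n) = SP 1 n 0 q := by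
  rw [s1ser, SP]
  exact tsum_congr fun m => by simp [Pt, ← pow_mul]

lemma a4_eq (q : ℂ) : a4T n q = -5 * SP 3 n 0 q := by
  rw [a4T, SP]
  congr 1

lemma xT_eq (hq0 : q ≠ 0) (hv0 : v ≠ 0) (hk : k < n) :
    xT n k v q = SX n k v q - 2 * SP 1 n 0 q := by
  rw [xT, Xtate, s1_eq, SX]
  congr 1
  exact tsum_congr fun m => term_eq_X hq0 hv0 hk m

lemma yT_eq (hq0 : q ≠ 0) (hv0 : v ≠ 0) (hk : k < n) :
    yT n k v q = SY n k v q + SP 1 n 0 q := by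
  rw [yT, Ytate, s1_eq, SY]
  congr 1
  exact tsum_congr fun m => term_eq_Y hq0 hv0 hk m

lemma α₃T_eq (hq0 : q ≠ 0) (hv0 : v ≠ 0) (hk : k < n) :
    α₃T n k v q = SX n k v q + 2 * SY n k v q := by
  rw [α₃T, xT_eq hq0 hv0 hk, yT_eq hq0 hv0 hk]
  ring

lemma exists_ball_ne {f : ℂ → ℂ} (hf : DifferentiableOn ℂ f (ball (0:ℂ) (1/2)))
    (h0 : f 0 ≠ 0) :
    ∃ ε : ℝ, 0 < ε ∧ ε < 1/2 ∧ ∀ q ∈ ball (0:ℂ) ε, f q ≠ 0 := by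
  have hc : ContinuousAt f 0 :=
    (hf.continuousOn.continuousAt (Metric.ball_mem_nhds 0 (by norm_num)))
  have hev : ∀ᶠ q in nhds 0, f q ≠ 0 := hc.eventually_ne h0
  rw [Metric.eventually_nhds_iff_ball] at hev
  obtain ⟨ε, hε, h⟩ := hev
  refine ⟨min ε (1/4), by positivity, ?_, ?_⟩
  · calc min ε (1/4) ≤ 1/4 := min_le_right _ _
      _ < 1/2 := by norm_num
  · intro q hq
    apply h
    exact ball_subset_ball (min_le_left _ _) hq


end TateAux

open TateAux

/-- For `n ≥ 3`, `0 ≤ k < n` and `|v| = 1` (with `v ≠ ±1` when `k = 0` or `2k = n`), the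
functions `x`, `y` extend holomorphically across `q = 0`; there is `ε ∈ (0,1)` such that
`α₃(q) ≠ 0` for `0 < |q| < ε` and `α₁, α₂, α₃` extend holomorphically across `q = 0` on
`|q| < ε`; moreover the holomorphic extension of `α₃` vanishes at `0` to order `0` with
value `(v+v²)/(1−v)³` if `k = 0`, to order exactly `k` with leading coefficient `v` if
`0 < k < n/2`, to order exactly `n/2` with leading coefficient `v − v⁻¹` if `2k = n`, and
to order exactly `n−k` with leading coefficient `−v⁻¹` if `n/2 < k < n`. -/
theorem alpha_holomorphic (n k : ℕ) (hn : 3 ≤ n) (hk : k < n) (v : ℂ)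
    (hv : ‖v‖ = 1)
    (hv' : (k = 0 ∨ 2 * k = n) → (v ≠ 1 ∧ v ≠ -1)) :
    (∃ ε : ℝ, 0 < ε ∧ ε ≤ 1 ∧ ∃ g : ℂ → ℂ, ExtendsHolo ε g (xT n k v)) ∧
    (∃ ε : ℝ, 0 < ε ∧ ε ≤ 1 ∧ ∃ g : ℂ → ℂ, ExtendsHolo ε g (yT n k v)) ∧
    ∃ ε : ℝ, 0 < ε ∧ ε < 1 ∧
      (∀ q : ℂ, q ≠ 0 → ‖q‖ < ε → α₃T n k v q ≠ 0) ∧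
      (∃ g : ℂ → ℂ, ExtendsHolo ε g (α₁T n k v)) ∧
      (∃ g : ℂ → ℂ, ExtendsHolo ε g (α₂T n k v)) ∧
      ∃ g₃ : ℂ → ℂ, ExtendsHolo ε g₃ (α₃T n k v) ∧
        (k = 0 → g₃ 0 = (v + v ^ 2) / (1 - v) ^ 3) ∧
        (0 < k → 2 * k < n →
          ∃ h : ℂ → ℂ, DifferentiableOn ℂ h (Metric.ball (0 : ℂ) ε) ∧
            (∀ q ∈ Metric.ball (0 : ℂ) ε, g₃ q = q ^ k * h q) ∧ h 0 = v) ∧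
        (2 * k = n →
          ∃ h : ℂ → ℂ, DifferentiableOn ℂ h (Metric.ball (0 : ℂ) ε) ∧
            (∀ q ∈ Metric.ball (0 : ℂ) ε, g₃ q = q ^ k * h q) ∧ h 0 = v - v⁻¹) ∧
        (n < 2 * k →
          ∃ h : ℂ → ℂ, DifferentiableOn ℂ h (Metric.ball (0 : ℂ) ε) ∧
            (∀ q ∈ Metric.ball (0 : ℂ) ε, g₃ q = q ^ (n - k) * h q) ∧ h 0 = -v⁻¹) := by
  have hvn : ‖v‖ = 1 := by exact hv
  have hv0 : v ≠ 0 := by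
    intro h; rw [h, norm_zero] at hvn; norm_num at hvn
  have hv1 : k = 0 → v ≠ 1 := fun h => (hv' (Or.inl h)).1
  have hn1 : 1 ≤ n := by omega
  -- the x and y extensions
  refine ⟨⟨1/2, by norm_num, by norm_num, fun q => SX n k v q - 2 * SP 1 n 0 q, ?_, ?_⟩,
    ⟨1/2, by norm_num, by norm_num, fun q => SY n k v q + SP 1 n 0 q, ?_, ?_⟩, ?_⟩
  · exact (SX_diff hn hk hvn hv1).sub ((SP_diff hn1 (Nat.zero_le n)).const_mul 2)
  · intro q _ hq0
    exact (xT_eq hq0 hv0 hk).symm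
  · exact (SY_diff hn hk hvn hv1).add (SP_diff hn1 (Nat.zero_le n))
  · intro q _ hq0
    exact (yT_eq hq0 hv0 hk).symm
  -- the α part
  by_cases hk0 : k = 0
  · -- k = 0 : nonvanishing at the origin
    set g3 : ℂ → ℂ := fun q => SX n k v q + 2 * SY n k v q with hg3
    have hg3diff : DifferentiableOn ℂ g3 (ball (0:ℂ) (1/2)) :=
      (SX_diff hn hk hvn hv1).add ((SY_diff hn hk hvn hv1).const_mul 2)
    have h1v : (1 : ℂ) - v ≠ 0 := sub_ne_zero.mpr (Ne.symm (hv1 hk0))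
    have hval : g3 0 = (v + v ^ 2) / (1 - v) ^ 3 := by
      rw [hg3]
      simp only
      rw [SX_zero_k0 hn hk hk0, SY_zero_k0 hn hk hk0]
      field_simp
      ring
    have hvalne : g3 0 ≠ 0 := by
      rw [hval]
      apply div_ne_zero
      · intro h
        have h2 : v * (1 + v) = 0 := by linear_combination h
        rcases mul_eq_zero.mp h2 with h3 | h3
        · exact hv0 h3
        · exact (hv' (Or.inl hk0)).2 (by linear_combination h3)
      · exact pow_ne_zero _ h1v
    obtain ⟨ε, hε, hε2, hne⟩ := exists_ball_ne hg3diff hvalne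
    have hsub : ball (0:ℂ) ε ⊆ ball (0:ℂ) (1/2) := ball_subset_ball hε2.le
    have hα3 : ∀ q : ℂ, q ∈ ball (0:ℂ) ε → q ≠ 0 → α₃T n k v q = g3 q := by
      intro q _ hq0
      rw [α₃T_eq hq0 hv0 hk, hg3]
    refine ⟨ε, hε, by linarith, ?_, ?_, ?_, g3, ⟨hg3diff.mono hsub, fun q hq hq0 => (hα3 q hq hq0).symm⟩,
      fun _ => hval, ?_, ?_, ?_⟩
    · intro q hq0 hqε
      have hqb : q ∈ ball (0:ℂ) ε := by
        rw [mem_ball_zero_iff]; exact hqε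
      rw [hα3 q hqb hq0]
      exact hne q hqb
    · -- α₁
      refine ⟨fun q => ((SX n k v q - 2 * SP 1 n 0 q) + 6 * (SX n k v q - 2 * SP 1 n 0 q) ^ 2
        + 2 * (-5 * SP 3 n 0 q)) / g3 q, ?_, ?_⟩
      · apply DifferentiableOn.div _ (hg3diff.mono hsub) (fun q hq => hne q hq)
        have hgx : DifferentiableOn ℂ (fun q => SX n k v q - 2 * SP 1 n 0 q) (ball (0:ℂ) ε) :=
          ((SX_diff hn hk hvn hv1).sub ((SP_diff hn1 (Nat.zero_le n)).const_mul 2)).mono hsub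
        exact (hgx.add ((hgx.pow 2).const_mul 6)).add
          (((SP_diff hn1 (Nat.zero_le n)).const_mul (-5)).mono hsub |>.const_mul 2)
      · intro q hq hq0
        rw [α₁T, xT_eq hq0 hv0 hk, a4_eq, hα3 q hq hq0]
    · -- α₂
      refine ⟨fun q => 3 * (SX n k v q - 2 * SP 1 n 0 q)
        - ((-5 * SP 3 n 0 q) - (SX n k v q - 2 * SP 1 n 0 q)
            + 3 * (SX n k v q - 2 * SP 1 n 0 q) ^ 2) / g3 q
        - (((-5 * SP 3 n 0 q) - (SX n k v q - 2 * SP 1 n 0 q)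
            + 3 * (SX n k v q - 2 * SP 1 n 0 q) ^ 2) / g3 q) ^ 2, ?_, ?_⟩
      · have hgx : DifferentiableOn ℂ (fun q => SX n k v q - 2 * SP 1 n 0 q) (ball (0:ℂ) ε) :=
          ((SX_diff hn hk hvn hv1).sub ((SP_diff hn1 (Nat.zero_le n)).const_mul 2)).mono hsub
        have hs : DifferentiableOn ℂ (fun q => ((-5 * SP 3 n 0 q) - (SX n k v q - 2 * SP 1 n 0 q)
            + 3 * (SX n k v q - 2 * SP 1 n 0 q) ^ 2) / g3 q) (ball (0:ℂ) ε) := by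
          apply DifferentiableOn.div _ (hg3diff.mono hsub) (fun q hq => hne q hq)
          exact ((((SP_diff hn1 (Nat.zero_le n)).const_mul (-5)).mono hsub).sub hgx).add
            ((hgx.pow 2).const_mul 3)
        exact ((hgx.const_mul 3).sub hs).sub (hs.pow 2)
      · intro q hq hq0
        rw [α₂T, s'T, xT_eq hq0 hv0 hk, a4_eq, hα3 q hq hq0]
    · intro h; omega
    · intro h; omega
    · intro h; omega
  · -- k ≥ 1
    have hk1 : 1 ≤ k := by omega
    have hrn : rr n k ≤ n := rr_le_n hk
    have hval := Sh_zero (v := v) hn hk hk1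
    have hSh0 : Sh n k v 0 ≠ 0 := by
      rw [hval]
      rcases lt_trichotomy (2 * k) n with hlt | heq | hgt
      · have h1 : rr n k = k := by rw [rr]; omega
        have h2 : ¬ (n - k = rr n k) := by omega
        rw [if_pos h1.symm, if_neg h2, add_zero]
        exact hv0
      · have h1 : rr n k = k := by rw [rr]; omega
        have h2 : n - k = rr n k := by omega
        rw [if_pos h1.symm, if_pos h2]
        intro hcon
        have hv2 : v ^ 2 = 1 := by
          have : v * v = v * v⁻¹ := by
            have hvv : v = v⁻¹ := by linear_combination hcon
            rw [← hvv]
          rw [mul_inv_cancel₀ hv0] at this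
          rw [sq]; exact this
        have : (v - 1) * (v + 1) = 0 := by linear_combination hv2
        rcases mul_eq_zero.mp this with h3 | h3
        · exact (hv' (Or.inr heq)).1 (by linear_combination h3)
        · exact (hv' (Or.inr heq)).2 (by linear_combination h3)
      · have h1 : ¬ (k = rr n k) := by rw [rr]; omega
        have h2 : n - k = rr n k := by rw [rr]; omega
        rw [if_neg h1, if_pos h2, zero_add]
        exact neg_ne_zero.mpr (inv_ne_zero hv0)
    obtain ⟨ε, hε, hε2, hne⟩ := exists_ball_ne (Sh_diff hn hk hvn hk1) hSh0
    have hsub : ball (0:ℂ) ε ⊆ ball (0:ℂ) (1/2) := ball_subset_ball hε2.le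
    set r := rr n k with hrdef
    set hx : ℂ → ℂ := fun q => SHX n k v q - 2 * SP 1 n r q with hhx
    set ha4 : ℂ → ℂ := fun q => -5 * SP 3 n r q with hha4
    have keyx : ∀ q : ℂ, q ≠ 0 → xT n k v q = q ^ r * hx q := by
      intro q hq0
      rw [xT_eq hq0 hv0 hk, SX_factor hk, SP_factor r hrn hn1, hhx]
      ring
    have keya4 : ∀ q : ℂ, a4T n q = q ^ r * ha4 q := by
      intro q
      rw [a4_eq, SP_factor r hrn hn1, hha4]
      ring
    have keyα3 : ∀ q : ℂ, q ≠ 0 → ‖q‖ < 1/2 → α₃T n k v q = q ^ r * Sh n k v q := by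
      intro q hq0 hq
      rw [α₃T_eq hq0 hv0 hk, Sxy_factor hn hk hvn hk1 hq]
    have hxdiff : DifferentiableOn ℂ hx (ball (0:ℂ) (1/2)) :=
      (SHX_diff hn hk hvn hk1).sub ((SP_diff hn1 hrn).const_mul 2)
    have ha4diff : DifferentiableOn ℂ ha4 (ball (0:ℂ) (1/2)) :=
      (SP_diff hn1 hrn).const_mul (-5)
    have hqr : ∀ q : ℂ, q ≠ 0 → (q : ℂ) ^ r ≠ 0 := fun q hq0 => pow_ne_zero _ hq0
    set hsf : ℂ → ℂ := fun q => (ha4 q - hx q + 3 * (q ^ r * (hx q) ^ 2)) / Sh n k v q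
      with hhsf
    have keys' : ∀ q : ℂ, q ∈ ball (0:ℂ) ε → q ≠ 0 → s'T n k v q = hsf q := by
      intro q hq hq0
      have hqb : ‖q‖ < 1/2 := by
        have := hsub hq; rwa [mem_ball_zero_iff] at this
      rw [s'T, keyx q hq0, keya4 q, keyα3 q hq0 hqb, hhsf]
      have hnum : q ^ r * ha4 q - q ^ r * hx q + 3 * (q ^ r * hx q) ^ 2
          = q ^ r * (ha4 q - hx q + 3 * (q ^ r * (hx q) ^ 2)) := by ring
      rw [hnum, mul_div_mul_left _ _ (hqr q hq0)]
    have hsfdiff : DifferentiableOn ℂ hsf (ball (0:ℂ) ε) := by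
      apply DifferentiableOn.div _ ((Sh_diff hn hk hvn hk1).mono hsub) (fun q hq => hne q hq)
      exact ((ha4diff.mono hsub).sub (hxdiff.mono hsub)).add
        ((((differentiable_pow r).differentiableOn).mul ((hxdiff.mono hsub).pow 2)).const_mul 3)
    refine ⟨ε, hε, by linarith, ?_, ?_, ?_, fun q => q ^ r * Sh n k v q, ⟨?_, ?_⟩, ?_, ?_, ?_, ?_⟩
    · -- α₃ nonzero
      intro q hq0 hqε
      have hqb : q ∈ ball (0:ℂ) ε := by
        rw [mem_ball_zero_iff]; exact hqε
      have hqh : ‖q‖ < 1/2 := by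
        have := hsub hqb; rwa [mem_ball_zero_iff] at this
      rw [keyα3 q hq0 hqh]
      exact mul_ne_zero (hqr q hq0) (hne q hqb)
    · -- α₁ extension
      refine ⟨fun q => (hx q + 6 * (q ^ r * (hx q) ^ 2) + 2 * ha4 q) / Sh n k v q, ?_, ?_⟩
      · apply DifferentiableOn.div _ ((Sh_diff hn hk hvn hk1).mono hsub) (fun q hq => hne q hq)
        exact ((hxdiff.mono hsub).add
          ((((differentiable_pow r).differentiableOn).mul ((hxdiff.mono hsub).pow 2)).const_mul 6)).add
          ((ha4diff.mono hsub).const_mul 2)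
      · intro q hq hq0
        have hqb : ‖q‖ < 1/2 := by
          have := hsub hq; rwa [mem_ball_zero_iff] at this
        rw [α₁T, keyx q hq0, keya4 q, keyα3 q hq0 hqb]
        have hnum : q ^ r * hx q + 6 * (q ^ r * hx q) ^ 2 + 2 * (q ^ r * ha4 q)
            = q ^ r * (hx q + 6 * (q ^ r * (hx q) ^ 2) + 2 * ha4 q) := by ring
        rw [hnum, mul_div_mul_left _ _ (hqr q hq0)]
    · -- α₂ extension
      refine ⟨fun q => 3 * (q ^ r * hx q) - hsf q - (hsf q) ^ 2, ?_, ?_⟩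
      · exact ((((differentiable_pow r).differentiableOn).mul (hxdiff.mono hsub)).const_mul 3
          |>.sub hsfdiff).sub (hsfdiff.pow 2)
      · intro q hq hq0
        rw [α₂T, keyx q hq0, keys' q hq hq0]
    · -- g₃ differentiable
      exact ((differentiable_pow r).differentiableOn).mul ((Sh_diff hn hk hvn hk1).mono hsub)
    · -- g₃ agrees with α₃
      intro q hq hq0
      have hqb : ‖q‖ < 1/2 := by
        have := hsub hq; rwa [mem_ball_zero_iff] at this
      exact (keyα3 q hq0 hqb).symm
    · intro h; omega
    · -- 0 < k, 2k < n
      intro _ hlt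
      have h1 : r = k := by rw [hrdef, rr]; omega
      refine ⟨Sh n k v, (Sh_diff hn hk hvn hk1).mono hsub, fun q _ => by rw [h1], ?_⟩
      rw [hval]
      have h2 : ¬ (n - k = rr n k) := by rw [rr]; omega
      rw [if_pos (by omega : k = rr n k), if_neg h2, add_zero]
    · -- 2k = n
      intro heq
      have h1 : r = k := by rw [hrdef, rr]; omega
      refine ⟨Sh n k v, (Sh_diff hn hk hvn hk1).mono hsub, fun q _ => by rw [h1], ?_⟩
      rw [hval]
      rw [if_pos (by omega : k = rr n k), if_pos (by omega : n - k = rr n k)]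
      ring
    · -- n < 2k
      intro hgt
      have h1 : r = n - k := by rw [hrdef, rr]; omega
      refine ⟨Sh n k v, (Sh_diff hn hk hvn hk1).mono hsub, fun q _ => by rw [h1], ?_⟩
      rw [hval]
      rw [if_neg (by rw [rr]; omega : ¬ (k = rr n k)), if_pos (by rw [rr]; omega : n - k = rr n k),
        zero_add]
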